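/- arXiv:2406.09659 — 2 statements merged into one kernel-verified Lean document; each statement's English description precedes it below -/
import Mathlib

section
/- Let n ≥ 1, let J = (j₁,j₂,j₃) be nonnegative integers with j₁+j₂+j₃ = n, set v = (√(j₁/n), √(j₂/n), √(j₃/n)), and define b_{n,J}(x) = √(n choose J) · x₁^{j₁} x₂^{j₂} x₃^{j₃} for x in the unit sphere of ℝ³ with all coordinates nonnegative. Define f_v(x) = log(v₁^{v₁²} v₂^{v₂²} v₃^{v₃²}) - log(x₁^{v₁²} x₂^{v₂²} x₃^{v₃²}) with the convention 0^0 = 1. Then 0 ≤ b_{n,J}(x) ≤ exp(-n·f_v(x)). -/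
open Finset

lemma multinomial_term_le (n : ℕ) (J : Fin 3 → ℕ) (hJ : ∑ i, J i = n)
    (p : Fin 3 → ℝ) (hp : ∀ i, 0 ≤ p i) :
    (Nat.multinomial Finset.univ J : ℝ) * ∏ i, p i ^ J i ≤ (∑ i, p i) ^ n := by
  rw [Finset.sum_pow_eq_sum_piAntidiag]
  refine Finset.single_le_sum (f := fun k => (Nat.multinomial Finset.univ k : ℝ) *
    ∏ i, p i ^ k i) (fun k _ => ?_) ?_
  · exact mul_nonneg (Nat.cast_nonneg _) (Finset.prod_nonneg fun i _ => pow_nonneg (hp i) _)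
  · simp [Finset.mem_piAntidiag, hJ]

/-- Spatial localisation bound for the Kostlan basis functions:
`0 ≤ b_{n,J}(x) ≤ exp (-n * f_v x)`. -/
theorem kostlan_basis_localisation (n : ℕ) (hn : 1 ≤ n)
    (J : Fin 3 → ℕ) (hJ : ∑ i, J i = n)
    (x : Fin 3 → ℝ) (hxs : ∑ i, (x i) ^ 2 = 1) (hx : ∀ i, 0 ≤ x i)
    (v : Fin 3 → ℝ) (hv : ∀ i, v i = Real.sqrt ((J i : ℝ) / n))
    (b fv : ℝ)
    (hb : b = Real.sqrt (Nat.multinomial Finset.univ J : ℝ) * ∏ i, x i ^ (J i))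
    (hfv : fv = Real.log (∏ i, (v i) ^ ((v i) ^ 2 : ℝ))
              - Real.log (∏ i, (x i) ^ ((v i) ^ 2 : ℝ))) :
    0 ≤ b ∧ b ≤ Real.exp (-(n : ℝ) * fv) := by
  have hn0 : (0:ℝ) < n := by exact_mod_cast hn
  have hb0 : 0 ≤ b := by
    rw [hb]
    exact mul_nonneg (Real.sqrt_nonneg _) (Finset.prod_nonneg fun i _ => pow_nonneg (hx i) _)
  refine ⟨hb0, ?_⟩
  by_cases hzero : ∃ i, x i = 0 ∧ J i ≠ 0
  · obtain ⟨i, hxi, hJi⟩ := hzero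
    have : b = 0 := by
      rw [hb, Finset.prod_eq_zero (Finset.mem_univ i) (by rw [hxi]; exact zero_pow hJi)]
      ring
    rw [this]; exact (Real.exp_pos _).le
  push_neg at hzero
  -- now every i with J i ≠ 0 has x i > 0
  have hxpos : ∀ i, J i ≠ 0 → 0 < x i := fun i hi =>
    lt_of_le_of_ne (hx i) (fun h => hi (hzero i h.symm))
  have hvnn : ∀ i, 0 ≤ v i := fun i => by rw [hv i]; exact Real.sqrt_nonneg _
  have hvsq : ∀ i, (v i) ^ 2 = (J i : ℝ) / n := fun i => by
    rw [hv i]; exact Real.sq_sqrt (by positivity)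
  set Px := ∏ i, x i ^ ((J i : ℝ) / n) with hPx
  set Pv := ∏ i, v i ^ ((J i : ℝ) / n) with hPv
  have hPxpos : 0 < Px := by
    refine Finset.prod_pos fun i _ => ?_
    rcases eq_or_ne (J i) 0 with h | h
    · simp [h]
    · exact Real.rpow_pos_of_pos (hxpos i h) _
  have hPvpos : 0 < Pv := by
    refine Finset.prod_pos fun i _ => ?_
    rcases eq_or_ne (J i) 0 with h | h
    · simp [h]
    · refine Real.rpow_pos_of_pos ?_ _
      rw [hv i]
      refine Real.sqrt_pos.2 (by positivity)
  have hfv' : fv = Real.log Pv - Real.log Px := by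
    rw [hfv]; simp only [hvsq]; rfl
  have hexp : Real.exp (-(n : ℝ) * fv) = Px ^ n / Pv ^ n := by
    rw [hfv']
    have : -(n : ℝ) * (Real.log Pv - Real.log Px)
        = (n : ℝ) * Real.log Px - (n : ℝ) * Real.log Pv := by ring
    rw [this, Real.exp_sub, Real.exp_nat_mul, Real.exp_nat_mul, Real.exp_log hPxpos,
      Real.exp_log hPvpos]
  have hprodpow : ∀ (y : Fin 3 → ℝ), (∀ i, 0 ≤ y i) →
      (∏ i, y i ^ ((J i : ℝ) / n)) ^ n = ∏ i, y i ^ J i := by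
    intro y hy
    rw [← Finset.prod_pow]
    refine Finset.prod_congr rfl fun i _ => ?_
    rw [← Real.rpow_natCast (y i ^ ((J i : ℝ) / n)) n, ← Real.rpow_mul (hy i),
      div_mul_cancel₀ _ (ne_of_gt hn0), Real.rpow_natCast]
  have hPxn : Px ^ n = ∏ i, x i ^ J i := hprodpow x hx
  have hPvn : Pv ^ n = ∏ i, v i ^ J i := hprodpow v hvnn
  -- key inequality: √C * Pv^n ≤ 1
  have hC0 : (0:ℝ) ≤ (Nat.multinomial Finset.univ J : ℝ) := Nat.cast_nonneg _
  have hkey : Real.sqrt (Nat.multinomial Finset.univ J : ℝ) * Pv ^ n ≤ 1 := by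
    have ha0 : 0 ≤ Real.sqrt (Nat.multinomial Finset.univ J : ℝ) * Pv ^ n := by positivity
    have hsq : (Real.sqrt (Nat.multinomial Finset.univ J : ℝ) * Pv ^ n) ^ 2
        = (Nat.multinomial Finset.univ J : ℝ) * ∏ i, ((J i : ℝ) / n) ^ J i := by
      rw [mul_pow, Real.sq_sqrt hC0, hPvn, ← Finset.prod_pow]
      congr 1
      refine Finset.prod_congr rfl fun i _ => ?_
      rw [← pow_mul, mul_comm (J i) 2, pow_mul, hvsq i]
    have hsum : ∑ i, (J i : ℝ) / n = 1 := by
      rw [← Finset.sum_div]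
      rw [show (∑ i, (J i : ℝ)) = ((∑ i, J i : ℕ) : ℝ) by push_cast; rfl, hJ]
      exact div_self (ne_of_gt hn0)
    have hle := multinomial_term_le n J hJ (fun i => (J i : ℝ) / n) (fun i => by positivity)
    rw [hsum, one_pow] at hle
    nlinarith [hsq, hle, ha0]
  rw [hb, hexp, ← hPxn]
  calc Real.sqrt (Nat.multinomial Finset.univ J : ℝ) * Px ^ n
      = (Real.sqrt (Nat.multinomial Finset.univ J : ℝ) * Pv ^ n) * (Px ^ n / Pv ^ n) := by
        field_simp
    _ ≤ 1 * (Px ^ n / Pv ^ n) := by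
        refine mul_le_mul_of_nonneg_right hkey (by positivity)
    _ = Px ^ n / Pv ^ n := one_mul _
end

section
/- For every real u with 0 < u < 1, one has ∫₀^∞ e^{-w}·u^{tanh(w/2)} dw ≤ 2/|log u|. -/
open Real MeasureTheory Set Filter

private lemma tanh_hasDerivAt (x : ℝ) :
    HasDerivAt Real.tanh (1 / Real.cosh x ^ 2) x := by
  have h := (Real.hasDerivAt_sinh x).div (Real.hasDerivAt_cosh x) (Real.cosh_pos x).ne'
  have : (Real.cosh x * Real.cosh x - Real.sinh x * Real.sinh x) / Real.cosh x ^ 2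
      = 1 / Real.cosh x ^ 2 := by
    rw [show Real.cosh x * Real.cosh x - Real.sinh x * Real.sinh x
        = Real.cosh x ^ 2 - Real.sinh x ^ 2 by ring, Real.cosh_sq_sub_sinh_sq]
  rw [this] at h
  have he : Real.tanh = fun y => Real.sinh y / Real.cosh y :=
    funext fun y => Real.tanh_eq_sinh_div_cosh y
  rw [he]
  exact h

private lemma tanh_eq_aux (x : ℝ) :
    Real.tanh x = (1 - Real.exp (-(2 * x))) / (1 + Real.exp (-(2 * x))) := by
  have hab : Real.exp x * Real.exp (-x) = 1 := by
    rw [← Real.exp_add]; simp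
  have h2 : Real.exp (-(2 * x)) = Real.exp (-x) * Real.exp (-x) := by
    rw [← Real.exp_add]; ring_nf
  have hc : Real.exp x + Real.exp (-x) > 0 := by positivity
  have hd : 1 + Real.exp (-(2 * x)) > 0 := by positivity
  rw [Real.tanh_eq_sinh_div_cosh, Real.sinh_eq, Real.cosh_eq]
  rw [div_div_div_comm]
  field_simp
  linear_combination (norm := ring_nf) 2 * Real.exp x * h2 + 2 * Real.exp (-x) * hab

private lemma tanh_tendsto : Tendsto Real.tanh atTop (nhds 1) := by
  have : Tendsto (fun x : ℝ => (1 - Real.exp (-(2 * x))) / (1 + Real.exp (-(2 * x))))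
      atTop (nhds 1) := by
    have he : Tendsto (fun x : ℝ => Real.exp (-(2 * x))) atTop (nhds 0) :=
      Real.tendsto_exp_neg_atTop_nhds_zero.comp
        (Filter.Tendsto.const_mul_atTop two_pos tendsto_id)
    have h1 : Tendsto (fun x : ℝ => 1 - Real.exp (-(2 * x))) atTop (nhds 1) := by
      simpa using (tendsto_const_nhds.sub he)
    have h2 : Tendsto (fun x : ℝ => 1 + Real.exp (-(2 * x))) atTop (nhds 1) := by
      simpa using (tendsto_const_nhds.add he)
    simpa [Pi.div_def] using h1.div h2 (by norm_num)
  exact this.congr fun x => (tanh_eq_aux x).symm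

private lemma continuous_tanh' : Continuous Real.tanh := by
  have : Real.tanh = fun x => Real.sinh x / Real.cosh x :=
    funext fun y => Real.tanh_eq_sinh_div_cosh y
  rw [this]
  exact Real.continuous_sinh.div Real.continuous_cosh fun x => (Real.cosh_pos x).ne'

theorem integral_exp_mul_rpow_tanh_le (u : ℝ) (h0 : 0 < u) (h1 : u < 1) :
    ∫ w in Set.Ioi (0 : ℝ), Real.exp (-w) * u ^ Real.tanh (w / 2) ≤ 2 / |Real.log u| := by
  have hlog : Real.log u < 0 := Real.log_neg h0 h1
  set c : ℝ := -Real.log u with hcdef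
  have hc : 0 < c := by simp only [hcdef]; linarith
  have habs : |Real.log u| = c := abs_of_neg hlog
  have htnn : ∀ w : ℝ, 0 ≤ w → 0 ≤ Real.tanh (w / 2) := by
    intro w hw
    rw [Real.tanh_eq_sinh_div_cosh]
    exact div_nonneg (Real.sinh_nonneg_iff.2 (by linarith)) (Real.cosh_pos _).le
  have hcosh_le : ∀ w : ℝ, 0 ≤ w → Real.cosh (w / 2) ^ 2 ≤ Real.exp w := by
    intro w hw
    have h1 : Real.cosh (w / 2) ≤ Real.exp (w / 2) := by
      rw [Real.cosh_eq]
      have := Real.exp_le_exp.2 (neg_le_self (by linarith : (0:ℝ) ≤ w / 2))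
      linarith
    have h2 : Real.exp (w / 2) ^ 2 = Real.exp w := by
      rw [sq, ← Real.exp_add]; congr 1; ring
    calc Real.cosh (w / 2) ^ 2 ≤ Real.exp (w / 2) ^ 2 :=
          pow_le_pow_left₀ (Real.cosh_pos _).le h1 2
      _ = Real.exp w := h2
  have hcosh_ge : ∀ w : ℝ, Real.exp w ≤ 4 * Real.cosh (w / 2) ^ 2 := by
    intro w
    have h1 : Real.exp (w / 2) / 2 ≤ Real.cosh (w / 2) := by
      rw [Real.cosh_eq]
      have := (Real.exp_pos (-(w / 2))).le
      linarith
    have h2 : Real.exp (w / 2) ^ 2 = Real.exp w := by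
      rw [sq, ← Real.exp_add]; congr 1; ring
    nlinarith [Real.exp_pos (w / 2), Real.cosh_pos (w / 2)]
  set G : ℝ → ℝ := fun w => Real.exp (-(c * Real.tanh (w / 2))) / Real.cosh (w / 2) ^ 2
    with hGdef
  set F : ℝ → ℝ := fun w => -(2 / c) * Real.exp (-(c * Real.tanh (w / 2))) with hFdef
  have hcont_t : Continuous fun w : ℝ => Real.tanh (w / 2) :=
    continuous_tanh'.comp (continuous_id.div_const 2)
  have hGcont : Continuous G :=
    (Real.continuous_exp.comp (continuous_const.mul hcont_t : Continuous fun w : ℝ => c * Real.tanh (w / 2)).neg).div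
      ((Real.continuous_cosh.comp (continuous_id.div_const 2)).pow 2)
      fun w => pow_ne_zero 2 (Real.cosh_pos _).ne'
  have hFcont : Continuous F :=
    continuous_const.mul
      (Real.continuous_exp.comp
        (continuous_const.mul hcont_t : Continuous fun w : ℝ => c * Real.tanh (w / 2)).neg)
  have hexp_int : IntegrableOn (fun w : ℝ => Real.exp (-w)) (Set.Ioi 0) := by
    have := exp_neg_integrableOn_Ioi 0 (one_pos (α := ℝ))
    simpa using this
  have hderiv : ∀ w : ℝ, HasDerivAt F (G w) w := by
    intro w
    have h1 : HasDerivAt (fun w : ℝ => w / 2) (1 / 2) w := (hasDerivAt_id w).div_const 2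
    have h2 : HasDerivAt (fun w : ℝ => Real.tanh (w / 2))
        (1 / Real.cosh (w / 2) ^ 2 * (1 / 2)) w := by have := (tanh_hasDerivAt (w / 2)).comp w h1; exact this
    have h3 : HasDerivAt (fun w : ℝ => -(c * Real.tanh (w / 2)))
        (-(c * (1 / Real.cosh (w / 2) ^ 2 * (1 / 2)))) w := (h2.const_mul c).neg
    have h4 : HasDerivAt (fun w : ℝ => Real.exp (-(c * Real.tanh (w / 2))))
        (Real.exp (-(c * Real.tanh (w / 2))) * -(c * (1 / Real.cosh (w / 2) ^ 2 * (1 / 2)))) w :=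
      (Real.hasDerivAt_exp _).comp w h3
    have h5 := h4.const_mul (-(2 / c))
    refine h5.congr_deriv ?_
    simp only [hGdef]
    field_simp
  have hGint : IntegrableOn G (Set.Ioi 0) := by
    refine Integrable.mono' (hexp_int.const_mul 4) hGcont.aestronglyMeasurable.restrict ?_
    filter_upwards [ae_restrict_mem measurableSet_Ioi] with w hw
    have hw0 : (0:ℝ) ≤ w := (Set.mem_Ioi.1 hw).le
    have hE : Real.exp (-(c * Real.tanh (w / 2))) ≤ 1 :=
      Real.exp_le_one_iff.2 (by nlinarith [htnn w hw0])
    have hcpos : (0:ℝ) < Real.cosh (w / 2) ^ 2 := pow_pos (Real.cosh_pos _) 2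
    rw [Real.norm_eq_abs, abs_of_nonneg (div_nonneg (Real.exp_pos _).le hcpos.le)]
    have h1 : G w ≤ 1 / Real.cosh (w / 2) ^ 2 := by
      simp only [hGdef]
      gcongr
    have h2 : 1 / Real.cosh (w / 2) ^ 2 ≤ 4 * Real.exp (-w) := by
      rw [div_le_iff₀ hcpos]
      have hme : Real.exp (-w) * Real.exp w = 1 := by rw [← Real.exp_add]; simp
      nlinarith [hcosh_ge w, Real.exp_pos (-w)]
    exact h1.trans h2
  have hlim : Tendsto F atTop (nhds (-(2 / c) * Real.exp (-c))) := by
    have h1 : Tendsto (fun w : ℝ => Real.tanh (w / 2)) atTop (nhds 1) :=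
      tanh_tendsto.comp (Tendsto.atTop_div_const two_pos tendsto_id)
    have h2 : Tendsto (fun w : ℝ => -(c * Real.tanh (w / 2))) atTop (nhds (-(c * 1))) :=
      ((h1.const_mul c).neg)
    have h3 := (Real.continuous_exp.tendsto (-(c * 1))).comp h2
    have h4 := h3.const_mul (-(2 / c))
    simp only [mul_one] at h4
    exact h4
  have key : ∫ w in Set.Ioi (0:ℝ), G w = (-(2 / c) * Real.exp (-c)) - F 0 :=
    integral_Ioi_of_hasDerivAt_of_tendsto hFcont.continuousWithinAt
      (fun x _ => hderiv x) hGint hlim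
  have hF0 : F 0 = -(2 / c) := by
    simp [hFdef, Real.tanh_zero]
  have hint1 : IntegrableOn
      (fun w : ℝ => Real.exp (-w) * Real.exp (-(c * Real.tanh (w / 2)))) (Set.Ioi 0) := by
    refine Integrable.mono' hexp_int
      ((Real.continuous_exp.comp continuous_neg).mul
        (Real.continuous_exp.comp (continuous_const.mul hcont_t : Continuous fun w : ℝ => c * Real.tanh (w / 2)).neg)).aestronglyMeasurable.restrict ?_
    filter_upwards [ae_restrict_mem measurableSet_Ioi] with w hw
    have hw0 : (0:ℝ) ≤ w := (Set.mem_Ioi.1 hw).le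
    have hE : Real.exp (-(c * Real.tanh (w / 2))) ≤ 1 :=
      Real.exp_le_one_iff.2 (by nlinarith [htnn w hw0])
    rw [Real.norm_eq_abs, abs_of_nonneg (by positivity)]
    nlinarith [Real.exp_pos (-w), Real.exp_pos (-(c * Real.tanh (w / 2)))]
  have hrw : ∀ w : ℝ, Real.exp (-w) * u ^ Real.tanh (w / 2)
      = Real.exp (-w) * Real.exp (-(c * Real.tanh (w / 2))) := by
    intro w
    rw [Real.rpow_def_of_pos h0]
    congr 2
    simp only [hcdef]; ring
  rw [habs]
  calc ∫ w in Set.Ioi (0:ℝ), Real.exp (-w) * u ^ Real.tanh (w / 2)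
      = ∫ w in Set.Ioi (0:ℝ), Real.exp (-w) * Real.exp (-(c * Real.tanh (w / 2))) := by
        simp only [hrw]
    _ ≤ ∫ w in Set.Ioi (0:ℝ), G w := by
        refine setIntegral_mono_on hint1 hGint measurableSet_Ioi ?_
        intro w hw
        have hw0 : (0:ℝ) ≤ w := (Set.mem_Ioi.1 hw).le
        have hB : Real.exp (-w) ≤ 1 / Real.cosh (w / 2) ^ 2 := by
          rw [Real.exp_neg, div_eq_inv_mul, mul_one]
          exact inv_anti₀ (by positivity) (hcosh_le w hw0)
        calc Real.exp (-w) * Real.exp (-(c * Real.tanh (w / 2)))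
            ≤ 1 / Real.cosh (w / 2) ^ 2 * Real.exp (-(c * Real.tanh (w / 2))) := by
              gcongr
          _ = G w := by simp only [hGdef]; ring
    _ = (-(2 / c) * Real.exp (-c)) - F 0 := key
    _ ≤ 2 / c := by
        rw [hF0]
        have := (Real.exp_pos (-c)).le
        have h2c : (0:ℝ) < 2 / c := by positivity
        nlinarith
end
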